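/- Let A be a finite-dimensional evolution algebra with natural basis B. Then there exist natural bases B' of rad(A) and B̄ of A/rad(A) such that Γ(rad(A), B') and Γ(A/rad(A), B̄) are full subgraphs of Γ(A,B) (on the acyclic vertices and on the remaining vertices, respectively). -/

import Mathlib

open Submodule

section EvolutionPreamble

/-- The set of `k`-th generation descendants of a vertex in a directed graph
given by an edge relation `E`; `Dk E 0 i = {i}`. -/
def Dk {V : Type*} (E : V → V → Prop) : ℕ → V → Set V
  | 0, i => {i}
  | n + 1, i => {k | ∃ j ∈ Dk E n i, E j k}

/-- A vertex is cyclic if there is a (possibly trivial) path from it to a vertex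
lying on a cycle. -/
def IsCyclicVertex {V : Type*} (E : V → V → Prop) (i : V) : Prop :=
  ∃ j, Relation.ReflTransGen E i j ∧ Relation.TransGen E j j

/-- Connectedness of a directed graph: every nontrivial partition of the
vertex set is crossed by an edge (in one direction or the other). -/
def GraphConnected {V : Type*} (E : V → V → Prop) : Prop :=
  ∀ s : Set V, s.Nonempty → sᶜ.Nonempty → ∃ x ∈ s, ∃ y ∈ sᶜ, E x y ∨ E y x

variable {K : Type*} [Field K] {A : Type*} [NonUnitalNonAssocRing A]
  [Module K A] [SMulCommClass K A A] [IsScalarTower K A A] {ι : Type*}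

/-- A basis is natural if distinct basis vectors multiply to zero. -/
def IsNaturalBasis (B : Module.Basis ι K A) : Prop := ∀ i j, i ≠ j → B i * B j = 0

/-- Edge relation of the directed graph `Γ(A,B)` associated to an evolution
algebra `A` with natural basis `B`: `(i,k)` is an edge iff the structure
constant `w_{ik}` is nonzero. -/
def edge (B : Module.Basis ι K A) (i k : ι) : Prop := B.repr (B i * B i) k ≠ 0

/-- First-generation descendants in `Γ(A,B)`. -/
def D1 (B : Module.Basis ι K A) (i : ι) : Set ι := {k | edge B i k}

/-- The increasing chain of index sets `λ_k(B)`: `λ_0 = ∅`,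
`λ_{k+1}(B) = {i : D¹(i) ⊆ λ_k(B)}`.  In particular
`λ_1(B) = {i : e_i² = 0}`. -/
def lam (B : Module.Basis ι K A) : ℕ → Set ι
  | 0 => ∅
  | n + 1 => {i | ∀ k, edge B i k → k ∈ lam B n}

/-- `I` is a (two-sided) ideal. -/
def IsIdeal (I : Submodule K A) : Prop := ∀ x ∈ I, ∀ a : A, x * a ∈ I ∧ a * x ∈ I

/-- The absorption property: `xA ⊆ I` implies `x ∈ I`. -/
def HasAbsorption (I : Submodule K A) : Prop := ∀ x : A, (∀ a : A, x * a ∈ I) → x ∈ I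

/-- The absorption radical: intersection of all ideals with the absorption property. -/
def rad (K : Type*) (A : Type*) [Field K] [NonUnitalNonAssocRing A]
    [Module K A] [SMulCommClass K A A] [IsScalarTower K A A] : Submodule K A :=
  sInf {I : Submodule K A | IsIdeal I ∧ HasAbsorption I}

lemma rad_isIdeal : IsIdeal (rad K A) := by
  intro x hx a
  rw [rad, Submodule.mem_sInf] at hx
  constructor <;>
    · rw [rad, Submodule.mem_sInf]
      intro I hI
      first
        | exact (hI.1 x (hx I hI) a).1
        | exact (hI.1 x (hx I hI) a).2

/-- The annihilator `ann(A) = {x : xA = Ax = 0}` as a submodule. -/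
def annSub (K : Type*) (A : Type*) [Field K] [NonUnitalNonAssocRing A]
    [Module K A] [SMulCommClass K A A] [IsScalarTower K A A] : Submodule K A where
  carrier := {x | ∀ a : A, x * a = 0 ∧ a * x = 0}
  add_mem' := by
    intro x y hx hy a
    constructor
    · rw [add_mul, (hx a).1, (hy a).1, add_zero]
    · rw [mul_add, (hx a).2, (hy a).2, add_zero]
  zero_mem' := by intro a; simp
  smul_mem' := by
    intro c x hx a
    constructor
    · rw [smul_mul_assoc, (hx a).1, smul_zero]
    · rw [mul_smul_comm, (hx a).2, smul_zero]

/-- The upper annihilating series: `ann⁰(A) = 0`,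
`annⁱ⁺¹(A) = {x : xA ∪ Ax ⊆ annⁱ(A)}`. -/
def annSeries (K : Type*) (A : Type*) [Field K] [NonUnitalNonAssocRing A]
    [Module K A] [SMulCommClass K A A] [IsScalarTower K A A] : ℕ → Submodule K A
  | 0 => ⊥
  | n + 1 =>
    { carrier := {x | ∀ a : A, x * a ∈ annSeries K A n ∧ a * x ∈ annSeries K A n}
      add_mem' := by
        intro x y hx hy a
        constructor
        · rw [add_mul]; exact add_mem (hx a).1 (hy a).1
        · rw [mul_add]; exact add_mem (hx a).2 (hy a).2
      zero_mem' := by intro a; simp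
      smul_mem' := by
        intro c x hx a
        constructor
        · rw [smul_mul_assoc]; exact smul_mem _ c (hx a).1
        · rw [mul_smul_comm]; exact smul_mem _ c (hx a).2 }

/-- The annihilator stabilizing index `asi(A)`. -/
noncomputable def asi (K : Type*) (A : Type*) [Field K] [NonUnitalNonAssocRing A]
    [Module K A] [SMulCommClass K A A] [IsScalarTower K A A] : ℕ :=
  sInf {q : ℕ | annSeries K A q = annSeries K A (q + 1)}

/-- Product of two submodules (span of pairwise products). -/
def smulSub (I J : Submodule K A) : Submodule K A :=
  Submodule.span K (Set.image2 (· * ·) (I : Set A) (J : Set A))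

/-- Powers of a subalgebra/ideal, with `N^{k} = Σ_{i+j=k, i,j ≥ 1} Nⁱ Nʲ`. -/
def npow (I : Submodule K A) : ℕ → Submodule K A
  | 0 => ⊥
  | 1 => I
  | n + 2 => ⨆ i : Fin (n + 1), smulSub (npow I (i.1 + 1)) (npow I (n + 1 - i.1))
  termination_by n => n
  decreasing_by
  · have := i.isLt; omega
  · have := i.isLt; omega

/-- `I` is an ideal of the subalgebra `N`. -/
def IsIdealIn (N I : Submodule K A) : Prop :=
  I ≤ N ∧ ∀ x ∈ I, ∀ a ∈ N, x * a ∈ I ∧ a * x ∈ I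

/-- The (sub)algebra `N` is decomposable: it is the direct sum of two nonzero
ideals of `N`. -/
def DecomposableIn (N : Submodule K A) : Prop :=
  ∃ I J : Submodule K A, IsIdealIn N I ∧ IsIdealIn N J ∧ I ≠ ⊥ ∧ J ≠ ⊥ ∧
    I ⊓ J = ⊥ ∧ I ⊔ J = N

/-- Multiplication inside an ideal `N` (an ideal is closed under products). -/
def subMul {N : Submodule K A} (hN : IsIdeal N) (x y : N) : N :=
  ⟨(x : A) * (y : A), (hN x x.2 y).1⟩

/-- The induced multiplication on the quotient `A ⧸ I` by an ideal `I`. -/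
def quotMul (I : Submodule K A) (hI : IsIdeal I) (x y : A ⧸ I) : A ⧸ I :=
  Quotient.liftOn₂ x y (fun a b => Submodule.Quotient.mk (a * b)) (by
    intro a b a' b' ha hb
    have ha' : a - a' ∈ I := (Submodule.quotientRel_def I).mp ha
    have hb' : b - b' ∈ I := (Submodule.quotientRel_def I).mp hb
    refine (Submodule.Quotient.eq I).mpr ?_
    have h : a * b - a' * b' = a * (b - b') + (a - a') * b' := by
      rw [mul_sub, sub_mul]; abel
    rw [h]
    exact add_mem (hI _ hb' a).2 (hI _ ha' b').1)

/-- Edge relation of the graph associated to the quotient evolution algebra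
`A ⧸ I` relative to a basis `C`. -/
def edgeQ {κ : Type*} (I : Submodule K A) (hI : IsIdeal I)
    (C : Module.Basis κ K (A ⧸ I)) (i k : κ) : Prop :=
  C.repr (quotMul I hI (C i) (C i)) k ≠ 0

end EvolutionPreamble

section MyAux

variable {K : Type*} [Field K] {A : Type*} [NonUnitalNonAssocRing A]
  [Module K A] [SMulCommClass K A A] [IsScalarTower K A A] {ι : Type*}

section WithFintype

variable [Fintype ι] (B : Module.Basis ι K A) (hB : IsNaturalBasis B)

include hB in
lemma mul_eq_aux (a b : A) :
    a * b = ∑ i : ι, (B.repr a i * B.repr b i) • (B i * B i) := by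
  conv_lhs => rw [← B.sum_repr a, ← B.sum_repr b]
  rw [Finset.sum_mul]
  refine Finset.sum_congr rfl fun i _ => ?_
  rw [smul_mul_assoc, Finset.mul_sum,
    Finset.sum_eq_single i
      (fun j _ hj => by rw [mul_smul_comm, hB i j (Ne.symm hj), smul_zero])
      (by simp)]
  rw [mul_smul_comm, smul_smul]

include hB in
lemma comm_aux (a b : A) : a * b = b * a := by
  rw [mul_eq_aux B hB, mul_eq_aux B hB]
  exact Finset.sum_congr rfl fun i _ => by rw [mul_comm]

include hB in
lemma mul_basis_aux (a : A) (j : ι) :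
    a * B j = (B.repr a j) • (B j * B j) := by
  rw [mul_eq_aux B hB,
    Finset.sum_eq_single j
      (fun i _ hi => by
        simp [Module.Basis.repr_self, Finsupp.single_apply, Ne.symm hi])
      (by simp)]
  simp [Module.Basis.repr_self]

lemma lam_mono (n : ℕ) : lam B n ⊆ lam B (n + 1) := by
  induction n with
  | zero => intro i hi; exact absurd hi (Set.notMem_empty i)
  | succ n ih => intro i hi k hk; exact ih (hi k hk)

lemma sq_mem_span_iff (i : ι) (s : Set ι) :
    B i * B i ∈ span K (B '' s) ↔ ∀ k, edge B i k → k ∈ s := by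
  rw [Module.Basis.mem_span_image]
  constructor
  · intro h k hk
    exact h (by simpa using Finsupp.mem_support_iff.mpr hk)
  · intro h k hk
    exact h k (Finsupp.mem_support_iff.mp (by simpa using hk))

include hB in
lemma annSeries_eq (n : ℕ) : annSeries K A n = span K (B '' lam B n) := by
  induction n with
  | zero => simp [annSeries, lam]
  | succ n ih =>
    ext x
    constructor
    · intro hx
      have hx' : ∀ a : A, x * a ∈ annSeries K A n ∧ a * x ∈ annSeries K A n := hx
      rw [Module.Basis.mem_span_image]
      intro j hj
      have hc : B.repr x j ≠ 0 := Finsupp.mem_support_iff.mp (by simpa using hj)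
      have h1 : x * B j ∈ span K (B '' lam B n) := by rw [← ih]; exact (hx' (B j)).1
      rw [mul_basis_aux B hB] at h1
      have hsq : B j * B j ∈ span K (B '' lam B n) := by
        have := smul_mem (span K (B '' lam B n)) (B.repr x j)⁻¹ h1
        rwa [smul_smul, inv_mul_cancel₀ hc, one_smul] at this
      exact (sq_mem_span_iff B j _).mp hsq
    · intro hx
      have key : ∀ a : A, x * a ∈ annSeries K A n := by
        intro a
        rw [ih, mul_eq_aux B hB]
        refine sum_mem fun i _ => ?_
        by_cases hc : B.repr x i = 0
        · simp [hc]
        · have hi : i ∈ lam B (n + 1) :=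
            B.mem_span_image.mp hx (by simpa using Finsupp.mem_support_iff.mpr hc)
          exact smul_mem _ _ ((sq_mem_span_iff B i _).mpr hi)
      exact fun a => ⟨key a, by rw [comm_aux B hB]; exact key a⟩

lemma exists_lam_stab : ∃ q, lam B q = lam B (q + 1) := by
  by_contra h
  push_neg at h
  have hstrict : ∀ q, (lam B q).ncard < (lam B (q + 1)).ncard := fun q =>
    Set.ncard_lt_ncard (Set.ssubset_iff_subset_ne.mpr ⟨lam_mono B q, h q⟩) (Set.toFinite _)
  have hge : ∀ q, q ≤ (lam B q).ncard := by
    intro q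
    induction q with
    | zero => exact Nat.zero_le _
    | succ n ih => exact Nat.lt_of_le_of_lt ih (hstrict n)
  have h1 := hge (Fintype.card ι + 1)
  have h2 : (lam B (Fintype.card ι + 1)).ncard ≤ Fintype.card ι := by
    have := Set.ncard_le_ncard (Set.subset_univ (lam B (Fintype.card ι + 1))) (Set.toFinite _)
    simpa [Set.ncard_univ, Nat.card_eq_fintype_card] using this
  omega

include hB in
lemma lam_asi_stab : lam B (asi K A) = lam B (asi K A + 1) := by
  obtain ⟨q, hq⟩ := exists_lam_stab B
  have hmem : asi K A ∈ {q | annSeries K A q = annSeries K A (q + 1)} :=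
    Nat.sInf_mem ⟨q, show annSeries K A q = annSeries K A (q + 1) by
      rw [annSeries_eq B hB, annSeries_eq B hB, hq]⟩
  have h2 : span K (B '' lam B (asi K A)) = span K (B '' lam B (asi K A + 1)) := by
    rw [← annSeries_eq B hB, ← annSeries_eq B hB]; exact hmem
  refine Set.Subset.antisymm (lam_mono B _) fun i hi => ?_
  have hmem2 : B i ∈ span K (B '' lam B (asi K A)) := by
    rw [h2]; exact subset_span ⟨i, hi, rfl⟩
  exact B.mem_span_image.mp hmem2 (by simp)

lemma rad_absorb : HasAbsorption (rad K A) := by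
  intro x hx
  rw [rad, Submodule.mem_sInf]
  intro I hI
  exact hI.2 x fun a => Submodule.mem_sInf.mp (hx a) I hI

include hB in
lemma basis_mem_rad : ∀ n, ∀ i ∈ lam B n, B i ∈ rad K A := by
  intro n
  induction n with
  | zero => intro i hi; exact absurd hi (Set.notMem_empty i)
  | succ n ih =>
    intro i hi
    apply rad_absorb
    intro a
    rw [comm_aux B hB, mul_basis_aux B hB]
    refine smul_mem _ _ ?_
    have hsq : B i * B i ∈ span K (B '' lam B n) := (sq_mem_span_iff B i _).mpr hi
    refine span_le.mpr ?_ hsq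
    rintro _ ⟨j, hj, rfl⟩
    exact ih j hj

include hB in
lemma rad_eq : rad K A = span K (B '' lam B (asi K A)) := by
  have hstab := lam_asi_stab B hB
  apply le_antisymm
  · refine sInf_le ⟨?_, ?_⟩
    · intro x hx a
      have key : x * a ∈ span K (B '' lam B (asi K A)) := by
        rw [mul_eq_aux B hB]
        refine sum_mem fun i _ => ?_
        by_cases hc : B.repr x i = 0
        · simp [hc]
        · have hi : i ∈ lam B (asi K A) :=
            B.mem_span_image.mp hx (by simpa using Finsupp.mem_support_iff.mpr hc)
          rw [hstab] at hi
          refine smul_mem _ _ ((sq_mem_span_iff B i _).mpr fun k hk => ?_)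
          rw [hstab]
          exact lam_mono B _ (hi k hk)
      exact ⟨key, by rw [comm_aux B hB]; exact key⟩
    · intro x hx
      rw [Module.Basis.mem_span_image]
      intro j hj
      have hc : B.repr x j ≠ 0 := Finsupp.mem_support_iff.mp (by simpa using hj)
      have h1 := hx (B j)
      rw [mul_basis_aux B hB] at h1
      have hsq : B j * B j ∈ span K (B '' lam B (asi K A)) := by
        have := smul_mem (span K (B '' lam B (asi K A))) (B.repr x j)⁻¹ h1
        rwa [smul_smul, inv_mul_cancel₀ hc, one_smul] at this
      rw [hstab]
      exact (sq_mem_span_iff B j _).mp hsq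
  · rw [span_le]
    rintro _ ⟨i, hi, rfl⟩
    exact basis_mem_rad B hB _ i hi

end WithFintype

section BasisConstr

lemma subtypeDomain_single_eq' {ι : Type*} {K : Type*} [Field K] {p : ι → Prop}
    (i : ι) (hi : p i) (c : K) :
    Finsupp.subtypeDomain p (Finsupp.single i c) = Finsupp.single ⟨i, hi⟩ c := by
  ext k
  rw [Finsupp.subtypeDomain_apply]
  rcases eq_or_ne (⟨i, hi⟩ : Subtype p) k with he | he
  · rw [← he]; simp
  · rw [Finsupp.single_eq_of_ne he.symm,
      Finsupp.single_eq_of_ne (fun hh => he (Subtype.ext hh.symm))]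

lemma subtypeDomain_single_eq_zero {ι : Type*} {K : Type*} [Field K] {p : ι → Prop}
    {i : ι} (hi : ¬ p i) (c : K) :
    Finsupp.subtypeDomain p (Finsupp.single i c) = 0 := by
  ext k
  rw [Finsupp.subtypeDomain_apply,
    Finsupp.single_eq_of_ne (fun hh => hi (by rw [← hh]; exact k.2))]
  simp

variable (B : Module.Basis ι K A) (s : Set ι) (h : rad K A = span K (B '' s))

include h in
lemma basis_mem_rad_of_mem (i : s) : B i.1 ∈ rad K A := by
  rw [h]; exact subset_span ⟨i.1, i.2, rfl⟩

include h in
lemma repr_support_subset {x : A} (hx : x ∈ rad K A) : ∀ j ∉ s, B.repr x j = 0 := by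
  intro j hj
  rw [h] at hx
  by_contra hc
  exact hj (B.mem_span_image.mp hx (by simpa using Finsupp.mem_support_iff.mpr hc))

/-- The coordinate linear equivalence for the radical. -/
noncomputable def radEquiv : (rad K A) ≃ₗ[K] (s →₀ K) :=
  LinearEquiv.ofLinear
    ((Finsupp.lsubtypeDomain (R := K) (M := K) s) ∘ₗ
      (B.repr : A →ₗ[K] ι →₀ K) ∘ₗ (rad K A).subtype)
    (Finsupp.linearCombination K (fun i : s => (⟨B i.1, basis_mem_rad_of_mem B s h i⟩ : rad K A)))
    (by
      apply Finsupp.lhom_ext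
      intro j c
      rw [LinearMap.comp_apply, LinearMap.comp_apply, Finsupp.linearCombination_single,
        LinearMap.id_apply, LinearMap.comp_apply, Submodule.coe_subtype, SetLike.val_smul,
        Finsupp.lsubtypeDomain_apply, map_smul]
      show Finsupp.subtypeDomain (fun x => x ∈ s) (c • (B.repr (B j.1) : ι →₀ K)) =
        Finsupp.single j c
      rw [Module.Basis.repr_self, Finsupp.smul_single, smul_eq_mul, mul_one,
        subtypeDomain_single_eq' j.1 j.2, Subtype.coe_eta]
    )
    (by
      apply LinearMap.ext
      intro x
      apply Submodule.injective_subtype (rad K A)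
      rw [LinearMap.comp_apply, LinearMap.id_apply, Finsupp.apply_linearCombination]
      have hsupp : ∀ a ∈ (B.repr (x : A)).support, a ∈ s := by
        intro a ha
        by_contra hc
        exact Finsupp.mem_support_iff.mp ha (repr_support_subset B s h x.2 a hc)
      have h2 : (Finsupp.subtypeDomain (fun x => x ∈ s) (B.repr (x : A))).sum
          (fun i (a : K) => a • B i.1) = (B.repr (x : A)).sum fun i a => a • B i :=
        Finsupp.sum_subtypeDomain_index (h := fun i a => a • B i) hsupp
      have h3 : (B.repr (x : A)).sum (fun i a => a • B i) = (x : A) := by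
        rw [← Finsupp.linearCombination_apply]; exact B.linearCombination_repr _
      rw [Finsupp.linearCombination_apply]
      exact h2.trans h3)

/-- The natural basis of the radical. -/
noncomputable def radBasis : Module.Basis s K (rad K A) := Module.Basis.ofRepr (radEquiv B s h)

lemma radBasis_repr (x : rad K A) (k : s) :
    (radBasis B s h).repr x k = B.repr (x : A) k.1 := rfl

lemma radBasis_apply (i : s) : (radBasis B s h i : A) = B i.1 := by
  rw [radBasis, Module.Basis.coe_ofRepr]
  simp only [radEquiv, LinearEquiv.ofLinear_symm_apply, Finsupp.linearCombination_single,
    one_smul]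

include h in
lemma rad_le_ker :
    rad K A ≤ LinearMap.ker ((Finsupp.lsubtypeDomain (R := K) (M := K) {i | i ∉ s}) ∘ₗ
      (B.repr : A →ₗ[K] ι →₀ K)) := by
  intro x hx
  rw [LinearMap.mem_ker]
  ext k
  rw [LinearMap.comp_apply, Finsupp.lsubtypeDomain_apply, Finsupp.subtypeDomain_apply]
  simpa using repr_support_subset B s h hx k.1 k.2

/-- The coordinate linear equivalence for the quotient. -/
noncomputable def quotEquiv : (A ⧸ rad K A) ≃ₗ[K] ({i : ι // i ∉ s} →₀ K) :=
  LinearEquiv.ofLinear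
    (Submodule.liftQ (rad K A)
      ((Finsupp.lsubtypeDomain (R := K) (M := K) {i | i ∉ s}) ∘ₗ (B.repr : A →ₗ[K] ι →₀ K))
      (rad_le_ker B s h))
    ((rad K A).mkQ ∘ₗ Finsupp.linearCombination K (fun i : {i : ι // i ∉ s} => B i.1))
    (by
      apply Finsupp.lhom_ext
      intro j c
      rw [LinearMap.comp_apply, LinearMap.comp_apply, Finsupp.linearCombination_single,
        LinearMap.id_apply, Submodule.mkQ_apply, Submodule.liftQ_apply, LinearMap.comp_apply]
      show Finsupp.subtypeDomain (fun x => x ∈ {i | i ∉ s}) (B.repr (c • B j.1)) =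
        Finsupp.single j c
      rw [map_smul, Module.Basis.repr_self, Finsupp.smul_single, smul_eq_mul, mul_one,
        subtypeDomain_single_eq' j.1 j.2, Subtype.coe_eta]
    )
    (by
      refine Submodule.linearMap_qext _ ?_
      refine Module.Basis.ext B fun i => ?_
      rw [LinearMap.comp_apply, LinearMap.comp_apply, Submodule.mkQ_apply,
        Submodule.liftQ_apply]
      show ((rad K A).mkQ ∘ₗ Finsupp.linearCombination K fun i : {i : ι // i ∉ s} => B i.1)
          (Finsupp.subtypeDomain (fun x => x ∈ {i | i ∉ s}) (B.repr (B i))) =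
        (LinearMap.id ∘ₗ (rad K A).mkQ) (B i)
      rw [Module.Basis.repr_self]
      simp only [LinearMap.comp_apply, Submodule.mkQ_apply, LinearMap.id_apply]
      by_cases hi : i ∈ s
      · rw [subtypeDomain_single_eq_zero (p := fun x => x ∈ {i | i ∉ s})
          (not_not_intro hi) 1, map_zero]
        exact ((Submodule.Quotient.mk_eq_zero _).mpr
          (by rw [h]; exact subset_span ⟨i, hi, rfl⟩)).symm
      · rw [subtypeDomain_single_eq' (p := fun x => x ∈ {i | i ∉ s}) i hi 1,
          Finsupp.linearCombination_single, one_smul])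

/-- The natural basis of the quotient. -/
noncomputable def quotBasis : Module.Basis {i : ι // i ∉ s} K (A ⧸ rad K A) :=
  Module.Basis.ofRepr (quotEquiv B s h)

lemma quotBasis_repr (a : A) (k : {i : ι // i ∉ s}) :
    (quotBasis B s h).repr (Submodule.Quotient.mk a) k = B.repr a k.1 := rfl

lemma quotBasis_apply (i : {i : ι // i ∉ s}) :
    quotBasis B s h i = Submodule.Quotient.mk (B i.1) := by
  rw [quotBasis, Module.Basis.coe_ofRepr]
  simp only [quotEquiv, LinearEquiv.ofLinear_symm_apply, LinearMap.comp_apply,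
    Finsupp.linearCombination_single, one_smul, Submodule.mkQ_apply]

lemma quotMul_mk (hI : IsIdeal (rad K A)) (a b : A) :
    quotMul (rad K A) hI (Submodule.Quotient.mk a) (Submodule.Quotient.mk b) =
      Submodule.Quotient.mk (a * b) := rfl

end BasisConstr

end MyAux

/-- There are natural bases of `rad(A)` and `A ⧸ rad(A)` whose associated
graphs are full subgraphs of `Γ(A,B)` (on the acyclic vertices `λ_m(B)` and on
the remaining vertices, respectively). -/
theorem stmt19 {K : Type*} [Field K] {A : Type*} [NonUnitalNonAssocRing A]
    [Module K A] [SMulCommClass K A A] [IsScalarTower K A A]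
    {ι : Type*} [Fintype ι] (B : Module.Basis ι K A) (hB : IsNaturalBasis B) :
    ∃ (B' : Module.Basis (lam B (asi K A)) K (rad K A))
      (Bb : Module.Basis {i : ι // i ∉ lam B (asi K A)} K (A ⧸ rad K A)),
      -- both are natural bases
      (∀ i j, i ≠ j → subMul rad_isIdeal (B' i) (B' j) = 0) ∧
      (∀ i j, i ≠ j → quotMul (rad K A) rad_isIdeal (Bb i) (Bb j) = 0) ∧
      -- Γ(rad A, B') is the full subgraph of Γ(A,B) on λ_m(B)
      (∀ i k, (B'.repr (subMul rad_isIdeal (B' i) (B' i)) k ≠ 0 ↔ edge B i.1 k.1)) ∧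
      -- Γ(A/rad A, Bb) is the full subgraph of Γ(A,B) on the complement
      (∀ i k, (edgeQ (rad K A) rad_isIdeal Bb i k ↔ edge B i.1 k.1)) := by
  classical
  have h : rad K A = span K (B '' lam B (asi K A)) := rad_eq B hB
  refine ⟨radBasis B _ h, quotBasis B _ h, ?_, ?_, ?_, ?_⟩
  · intro i j hij
    apply Subtype.ext
    show (radBasis B _ h i : A) * (radBasis B _ h j : A) = ((0 : rad K A) : A)
    rw [radBasis_apply, radBasis_apply, ZeroMemClass.coe_zero]
    exact hB i.1 j.1 fun hh => hij (Subtype.ext hh)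
  · intro i j hij
    rw [quotBasis_apply, quotBasis_apply, quotMul_mk,
      hB i.1 j.1 (fun hh => hij (Subtype.ext hh)), Submodule.Quotient.mk_zero]
  · intro i k
    have hv : ((subMul rad_isIdeal (radBasis B _ h i) (radBasis B _ h i)) : A) =
        B i.1 * B i.1 := by
      show (radBasis B _ h i : A) * (radBasis B _ h i : A) = _
      rw [radBasis_apply]
    rw [radBasis_repr, hv]
    exact Iff.rfl
  · intro i k
    rw [edgeQ, quotBasis_apply, quotMul_mk, quotBasis_repr]
    exact Iff.rfl
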